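/- If conditions M(λ_n) and S(λ_n) hold, then sup_{|s−t|≤δ_n} a_t(n/k_n)/a_s(n/k_n) = O(1) as n → ∞. -/

import Mathlib

open MeasureTheory Filter Topology Set

/-- `gfun y γ = (y^γ - 1)/γ`, read as `log y` for `γ = 0`. -/
noncomputable def gfun (y γ : ℝ) : ℝ := if γ = 0 then Real.log y else (y ^ γ - 1) / γ

noncomputable def Efun (x : ℝ) : ℝ := ∫ t in (0:ℝ)..1, Real.exp (x*t)

lemma Efun_mono : Monotone Efun := by
  intro a b hab
  apply intervalIntegral.integral_mono_on (by norm_num)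
  · exact (Real.continuous_exp.comp (continuous_const.mul continuous_id)).intervalIntegrable 0 1
  · exact (Real.continuous_exp.comp (continuous_const.mul continuous_id)).intervalIntegrable 0 1
  · intro t ht
    exact Real.exp_le_exp.2 (mul_le_mul_of_nonneg_right hab ht.1)

lemma Efun_eq {x : ℝ} (hx : x ≠ 0) : Efun x = (Real.exp x - 1)/x := by
  have h : ∀ t ∈ Set.uIcc (0:ℝ) 1, HasDerivAt (fun t => Real.exp (x*t) / x) (Real.exp (x*t)) t := by
    intro t _
    have h1 : HasDerivAt (fun t : ℝ => x*t) x t := by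
      simpa using (hasDerivAt_id t).const_mul x
    have h2 : HasDerivAt (fun t => Real.exp (x*t)) (Real.exp (x*t) * x) t := by
      exact (Real.hasDerivAt_exp (x*t)).comp t h1
    have := h2.div_const x
    simpa [mul_div_assoc, mul_div_cancel_right₀ _ hx] using this
  have := intervalIntegral.integral_eq_sub_of_hasDerivAt h
    ((Real.continuous_exp.comp (continuous_const.mul continuous_id)).intervalIntegrable 0 1)
  simp only [Efun, this, mul_one, mul_zero, Real.exp_zero]
  ring

lemma Efun_zero : Efun 0 = 1 := by simp [Efun]

lemma Efun_ge (x : ℝ) : Real.exp (min x 0) ≤ Efun x := by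
  rcases lt_trichotomy x 0 with h | h | h
  · rw [Efun_eq h.ne, min_eq_left h.le, le_div_iff_of_neg h]
    have h1 : Real.exp x * Real.exp (-x) = 1 := by rw [← Real.exp_add]; simp
    nlinarith [Real.add_one_le_exp (-x), Real.exp_pos x, h1]
  · simp [h, Efun_zero]
  · rw [Efun_eq h.ne', min_eq_right h.le, Real.exp_zero, le_div_iff₀ h]
    linarith [Real.add_one_le_exp x]

lemma Efun_le (x : ℝ) : Efun x ≤ Real.exp (max x 0) := by
  rcases lt_trichotomy x 0 with h | h | h
  · rw [Efun_eq h.ne, max_eq_right h.le, Real.exp_zero, div_le_iff_of_neg h]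
    linarith [Real.add_one_le_exp x]
  · simp [h, Efun_zero]
  · rw [Efun_eq h.ne', max_eq_left h.le, div_le_iff₀ h]
    have h1 : Real.exp x * Real.exp (-x) = 1 := by rw [← Real.exp_add]; simp
    nlinarith [Real.add_one_le_exp (-x), Real.exp_pos x, h1]

lemma Efun_pos (x : ℝ) : 0 < Efun x := lt_of_lt_of_le (Real.exp_pos _) (Efun_ge x)

lemma gfun_eq {y : ℝ} (hy : 0 < y) (γ : ℝ) : gfun y γ = Real.log y * Efun (γ * Real.log y) := by
  rcases eq_or_ne γ 0 with h | h
  · simp [gfun, h, Efun_zero]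
  · rw [gfun, if_neg h]
    rcases eq_or_ne (Real.log y) 0 with hl | hl
    · have : y ^ γ = 1 := by
        rw [Real.rpow_def_of_pos hy, hl, zero_mul, Real.exp_zero]
      simp [this, hl]
    · rw [Efun_eq (mul_ne_zero h hl), Real.rpow_def_of_pos hy]
      field_simp

lemma gfun_nonneg {y : ℝ} (hy : 1 ≤ y) (γ : ℝ) : 0 ≤ gfun y γ := by
  rw [gfun_eq (by linarith) γ]
  exact mul_nonneg (Real.log_nonneg hy) (Efun_pos _).le

lemma gfun_mul {a b : ℝ} (ha : 0 < a) (hb : 0 < b) (γ : ℝ) :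
    gfun (a*b) γ = gfun a γ + a ^ γ * gfun b γ := by
  rcases eq_or_ne γ 0 with h | h
  · simp [gfun, h, Real.log_mul ha.ne' hb.ne']
  · simp only [gfun, if_neg h]
    rw [Real.mul_rpow ha.le hb.le]
    have : a ^ γ * ((b ^ γ - 1) / γ) = (a ^ γ * b ^ γ - a ^ γ)/γ := by ring
    rw [this, ← add_div]
    ring_nf

lemma gfun_lb {y Γ' γ : ℝ} (hy : 1 ≤ y) (hΓ : 0 ≤ Γ') (hγ : |γ| ≤ Γ') :
    Real.log y * y ^ (-Γ') ≤ gfun y γ := by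
  have hy0 : (0:ℝ) < y := by linarith
  have hlog : 0 ≤ Real.log y := Real.log_nonneg hy
  rw [gfun_eq hy0 γ]
  have h1 : y ^ (-Γ') = Real.exp (-Γ' * Real.log y) := by
    rw [Real.rpow_def_of_pos hy0]; ring_nf
  rw [h1]
  apply mul_le_mul_of_nonneg_left _ hlog
  refine le_trans ?_ (Efun_ge _)
  apply Real.exp_le_exp.2
  have h2 : -Γ' ≤ γ := by rw [abs_le] at hγ; exact hγ.1
  have h4 : -Γ' * Real.log y ≤ γ * Real.log y := mul_le_mul_of_nonneg_right h2 hlog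
  have h3 : -Γ' * Real.log y ≤ 0 := mul_nonpos_of_nonpos_of_nonneg (by linarith) hlog
  exact le_min h4 h3

lemma gfun_ub {y Γ' γ : ℝ} (hy : 1 ≤ y) (hΓ : 0 ≤ Γ') (hγ : |γ| ≤ Γ') :
    gfun y γ ≤ Real.log y * y ^ Γ' := by
  have hy0 : (0:ℝ) < y := by linarith
  have hlog : 0 ≤ Real.log y := Real.log_nonneg hy
  rw [gfun_eq hy0 γ]
  have h1 : y ^ Γ' = Real.exp (Γ' * Real.log y) := by
    rw [Real.rpow_def_of_pos hy0]; ring_nf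
  rw [h1]
  apply mul_le_mul_of_nonneg_left _ hlog
  refine le_trans (Efun_le _) ?_
  apply Real.exp_le_exp.2
  have h2 : γ ≤ Γ' := by rw [abs_le] at hγ; exact hγ.2
  have h4 : γ * Real.log y ≤ Γ' * Real.log y := mul_le_mul_of_nonneg_right h2 hlog
  have h3 : (0:ℝ) ≤ Γ' * Real.log y := mul_nonneg hΓ hlog
  exact max_le h4 h3

noncomputable def quant {Ω : Type*} [MeasurableSpace Ω] (P : Measure Ω) (Z : Ω → ℝ) (p : ℝ) : ℝ :=
  sInf {x | p ≤ (P {ω | Z ω ≤ x}).toReal}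

section Quant
variable {Ω : Type*} [MeasurableSpace Ω] (P : Measure Ω) [IsProbabilityMeasure P]
  (Z : Ω → ℝ) (hZ : Measurable Z) (p : ℝ) (hp0 : 0 < p) (hp1 : p < 1)

lemma cdf_mono {x y : ℝ} (hxy : x ≤ y) :
    (P {ω | Z ω ≤ x}).toReal ≤ (P {ω | Z ω ≤ y}).toReal :=
  ENNReal.toReal_mono (measure_ne_top _ _)
    (measure_mono (fun ω (h : Z ω ≤ x) => le_trans h hxy))

include hp0 hp1 in
lemma quant_set_nonempty : Set.Nonempty {x | p ≤ (P {ω | Z ω ≤ x}).toReal} := by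
  have hmono : Monotone (fun m : ℕ => {ω | Z ω ≤ (m:ℝ)}) := by
    intro a b hab ω (h : Z ω ≤ (a:ℝ))
    exact le_trans h (by exact_mod_cast Nat.cast_le.2 hab)
  have hU : (⋃ m : ℕ, {ω | Z ω ≤ (m:ℝ)}) = univ := by
    ext ω; simp only [mem_iUnion, mem_univ, iff_true]
    obtain ⟨m, hm⟩ := exists_nat_ge (Z ω)
    exact ⟨m, hm⟩
  have htd := tendsto_measure_iUnion_atTop (μ := P) hmono
  rw [hU, measure_univ] at htd
  have hlt : ENNReal.ofReal p < 1 := by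
    rw [← ENNReal.ofReal_one]; exact (ENNReal.ofReal_lt_ofReal_iff (by norm_num)).2 hp1
  obtain ⟨m, hm⟩ := (htd.eventually (eventually_gt_nhds hlt)).exists
  refine ⟨(m:ℝ), ?_⟩
  calc p = (ENNReal.ofReal p).toReal := (ENNReal.toReal_ofReal hp0.le).symm
  _ ≤ (P {ω | Z ω ≤ (m:ℝ)}).toReal := ENNReal.toReal_mono (measure_ne_top _ _) hm.le

include hZ hp0 in
lemma quant_set_bddBelow : BddBelow {x | p ≤ (P {ω | Z ω ≤ x}).toReal} := by
  have hanti : Antitone (fun m : ℕ => {ω | Z ω ≤ -(m:ℝ)}) := by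
    intro a b hab ω (h : Z ω ≤ -(b:ℝ))
    refine le_trans h (by simp; exact_mod_cast Nat.cast_le.2 hab)
  have hI : (⋂ m : ℕ, {ω | Z ω ≤ -(m:ℝ)}) = ∅ := by
    ext ω; simp only [mem_iInter, mem_empty_iff_false, iff_false, not_forall]
    obtain ⟨m, hm⟩ := exists_nat_gt (-(Z ω))
    exact ⟨m, by simp only [mem_setOf_eq]; push_neg; linarith⟩
  have htd := tendsto_measure_iInter_atTop (μ := P) (s := fun m : ℕ => {ω | Z ω ≤ -(m:ℝ)})
    (fun m => (measurableSet_le hZ measurable_const).nullMeasurableSet)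
    hanti ⟨0, measure_ne_top _ _⟩
  rw [hI, measure_empty] at htd
  have hlt : (0:ENNReal) < ENNReal.ofReal p := ENNReal.ofReal_pos.2 hp0
  obtain ⟨m, hm⟩ := (htd.eventually (eventually_lt_nhds hlt)).exists
  refine ⟨-(m:ℝ), fun x hx => ?_⟩
  by_contra hcon
  push_neg at hcon
  have h1 : (P {ω | Z ω ≤ x}).toReal < p := by
    have hlt2 : P {ω | Z ω ≤ x} < ENNReal.ofReal p :=
      lt_of_le_of_lt (measure_mono (fun ω (h : Z ω ≤ x) => le_trans h hcon.le)) hm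
    exact (ENNReal.lt_ofReal_iff_toReal_lt (measure_ne_top _ _)).1 hlt2
  exact absurd hx (by simp only [mem_setOf_eq]; push_neg; exact h1)

include hZ hp0 hp1 in
lemma cdf_quant_ge : p ≤ (P {ω | Z ω ≤ quant P Z p}).toReal := by
  set S := {x | p ≤ (P {ω | Z ω ≤ x}).toReal} with hS
  have hne := quant_set_nonempty P Z p hp0 hp1
  have hbdd := quant_set_bddBelow P Z hZ p hp0
  have hmem : ∀ j : ℕ, p ≤ (P {ω | Z ω ≤ quant P Z p + 1/((j:ℝ)+1)}).toReal := by
    intro j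
    have hlt : sInf S < quant P Z p + 1/((j:ℝ)+1) := by
      have : (0:ℝ) < 1/((j:ℝ)+1) := by positivity
      simp only [quant, ← hS]; linarith
    obtain ⟨y, hyS, hy⟩ := (csInf_lt_iff hbdd hne).1 hlt
    exact le_trans hyS (cdf_mono P Z hy.le)
  have hanti : Antitone (fun j : ℕ => {ω | Z ω ≤ quant P Z p + 1/((j:ℝ)+1)}) := by
    intro a b hab ω (h : Z ω ≤ _)
    refine le_trans h ?_
    have : 1/((b:ℝ)+1) ≤ 1/((a:ℝ)+1) := by
      apply one_div_le_one_div_of_le (by positivity)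
      have : (a:ℝ) ≤ b := by exact_mod_cast hab
      linarith
    linarith
  have hI : (⋂ j : ℕ, {ω | Z ω ≤ quant P Z p + 1/((j:ℝ)+1)}) = {ω | Z ω ≤ quant P Z p} := by
    ext ω
    simp only [mem_iInter, mem_setOf_eq]
    constructor
    · intro h
      by_contra hcon
      push_neg at hcon
      obtain ⟨j, hj⟩ := exists_nat_gt (1/(Z ω - quant P Z p))
      have hpos : 0 < Z ω - quant P Z p := by linarith
      have h2 : 1/((j:ℝ)+1) < Z ω - quant P Z p := by
        rw [div_lt_iff₀ (by positivity)]
        rw [div_lt_iff₀ hpos] at hj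
        nlinarith
      linarith [h j]
    · intro h j
      have : (0:ℝ) < 1/((j:ℝ)+1) := by positivity
      linarith
  have htd := tendsto_measure_iInter_atTop (μ := P)
    (s := fun j : ℕ => {ω | Z ω ≤ quant P Z p + 1/((j:ℝ)+1)})
    (fun j => (measurableSet_le hZ measurable_const).nullMeasurableSet)
    hanti ⟨0, measure_ne_top _ _⟩
  rw [hI] at htd
  have htoReal := (ENNReal.tendsto_toReal (measure_ne_top P _)).comp htd
  exact ge_of_tendsto htoReal (Eventually.of_forall hmem)

include hZ hp0 hp1 in
lemma prob_gt_quant_le : (P {ω | quant P Z p < Z ω}).toReal ≤ 1 - p := by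
  have h1 := cdf_quant_ge P Z hZ p hp0 hp1
  have hc : {ω | quant P Z p < Z ω} = {ω | Z ω ≤ quant P Z p}ᶜ := by
    ext ω; simp [not_le]
  rw [hc, prob_compl_eq_one_sub (measurableSet_le hZ measurable_const)]
  rw [ENNReal.toReal_sub_of_le prob_le_one ENNReal.one_ne_top]
  simp only [ENNReal.toReal_one]
  linarith

include hZ hp0 hp1 in
lemma prob_ge_quant_ge : 1 - p ≤ (P {ω | quant P Z p ≤ Z ω}).toReal := by
  set S := {x | p ≤ (P {ω | Z ω ≤ x}).toReal} with hS
  have hbdd := quant_set_bddBelow P Z hZ p hp0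
  have hnotmem : ∀ j : ℕ, (P {ω | Z ω ≤ quant P Z p - 1/((j:ℝ)+1)}).toReal < p := by
    intro j
    by_contra hcon
    push_neg at hcon
    have hmem : quant P Z p - 1/((j:ℝ)+1) ∈ S := hcon
    have := csInf_le hbdd hmem
    have hpos : (0:ℝ) < 1/((j:ℝ)+1) := by positivity
    simp only [quant, ← hS] at this ⊢
    linarith
  have hanti : Antitone (fun j : ℕ => {ω | quant P Z p - 1/((j:ℝ)+1) < Z ω}) := by
    intro a b hab ω (h : _ < Z ω)
    refine lt_of_le_of_lt ?_ h
    have : 1/((b:ℝ)+1) ≤ 1/((a:ℝ)+1) := by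
      apply one_div_le_one_div_of_le (by positivity)
      have : (a:ℝ) ≤ b := by exact_mod_cast hab
      linarith
    linarith
  have hI : (⋂ j : ℕ, {ω | quant P Z p - 1/((j:ℝ)+1) < Z ω}) = {ω | quant P Z p ≤ Z ω} := by
    ext ω
    simp only [mem_iInter, mem_setOf_eq]
    constructor
    · intro h
      by_contra hcon
      push_neg at hcon
      obtain ⟨j, hj⟩ := exists_nat_gt (1/(quant P Z p - Z ω))
      have hpos : 0 < quant P Z p - Z ω := by linarith
      have h2 : 1/((j:ℝ)+1) < quant P Z p - Z ω := by
        rw [div_lt_iff₀ (by positivity)]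
        rw [div_lt_iff₀ hpos] at hj
        nlinarith
      linarith [h j]
    · intro h j
      have : (0:ℝ) < 1/((j:ℝ)+1) := by positivity
      linarith
  have hlow : ∀ j : ℕ, 1 - p ≤ (P {ω | quant P Z p - 1/((j:ℝ)+1) < Z ω}).toReal := by
    intro j
    have hc : {ω | quant P Z p - 1/((j:ℝ)+1) < Z ω} = {ω | Z ω ≤ quant P Z p - 1/((j:ℝ)+1)}ᶜ := by
      ext ω; simp [not_le]
    rw [hc, prob_compl_eq_one_sub (measurableSet_le hZ measurable_const)]
    rw [ENNReal.toReal_sub_of_le prob_le_one ENNReal.one_ne_top]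
    simp only [ENNReal.toReal_one]
    linarith [hnotmem j]
  have htd := tendsto_measure_iInter_atTop (μ := P)
    (s := fun j : ℕ => {ω | quant P Z p - 1/((j:ℝ)+1) < Z ω})
    (fun j => (measurableSet_lt measurable_const hZ).nullMeasurableSet)
    hanti ⟨0, measure_ne_top _ _⟩
  rw [hI] at htd
  have htoReal := (ENNReal.tendsto_toReal (measure_ne_top P _)).comp htd
  exact ge_of_tendsto htoReal (Eventually.of_forall hlow)

end Quant

lemma transfer {Ω : Type*} [MeasurableSpace Ω] (P : Measure Ω) [IsProbabilityMeasure P]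
    (Z W : Ω → ℝ) (hZ : Measurable Z) (hW : Measurable W)
    (p q : ℝ) (hp0 : 0 < p) (hp1 : p < 1) (hq0 : 0 < q) (hq1 : q < 1)
    (B : Set Ω) (cB η : ℝ) (hB : (P B).toReal ≤ cB)
    (hgap : 1 - q < (1 - p) - cB)
    (hesc : ∀ ω, ω ∉ B → quant P Z p ≤ Z ω → quant P Z p - η ≤ W ω) :
    quant P Z p - η ≤ quant P W q := by
  by_contra hcon
  push_neg at hcon
  set E := {ω | quant P Z p ≤ Z ω} with hE
  have hPE : 1 - p ≤ (P E).toReal := prob_ge_quant_ge P Z hZ p hp0 hp1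
  have hsub : E \ B ⊆ {ω | quant P W q < W ω} := by
    intro ω ⟨hωE, hωB⟩
    exact lt_of_lt_of_le hcon (hesc ω hωB hωE)
  have hEle : (P E).toReal ≤ (P (E \ B)).toReal + (P B).toReal := by
    have hsub2 : E ⊆ (E \ B) ∪ B := by
      intro ω h
      by_cases hb : ω ∈ B
      · exact Or.inr hb
      · exact Or.inl ⟨h, hb⟩
    have h1 : P E ≤ P (E \ B) + P B :=
      le_trans (measure_mono hsub2) (measure_union_le _ _)
    calc (P E).toReal ≤ (P (E \ B) + P B).toReal :=
        ENNReal.toReal_mono (by finiteness) h1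
      _ = (P (E \ B)).toReal + (P B).toReal :=
        ENNReal.toReal_add (measure_ne_top _ _) (measure_ne_top _ _)
  have hup : (P (E \ B)).toReal ≤ 1 - q :=
    le_trans (ENNReal.toReal_mono (measure_ne_top _ _) (measure_mono hsub))
      (prob_gt_quant_le P W hW q hq0 hq1)
  linarith

set_option maxHeartbeats 2000000 in
/-- Lemma 1, eq. (3.2): under M(λₙ) and S(λₙ),
sup_{|s-t|≤δₙ} a_t(n/kₙ)/a_s(n/kₙ) = O(1). -/
theorem scale_ratio_bounded
    {Ω : Type*} [MeasurableSpace Ω] (P : Measure Ω) [IsProbabilityMeasure P]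
    (X : Ω → ℝ → ℝ)
    (hXmeas : ∀ s, Measurable fun ω => X ω s)
    (hXcont : ∀ ω, ContinuousOn (X ω) (Icc 0 1))
    (γ : ℝ → ℝ) (hγcont : ContinuousOn γ (Icc 0 1))
    (F U : ℝ → ℝ → ℝ)
    (hF : ∀ s x, F s x = (P {ω | X ω s ≤ x}).toReal)
    (hU : ∀ s y, U s y = sInf {x : ℝ | 1 - 1 / y ≤ F s x})
    (A : ℕ → ℝ → ℝ) (hApos : ∀ n, ∀ s ∈ Icc (0:ℝ) 1, 0 < A n s)
    (k : ℕ → ℕ) (hk : ∀ n, 1 ≤ n → 1 ≤ k n ∧ k n ≤ n)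
    (hkinfty : Tendsto (fun n : ℕ => (k n : ℝ)) atTop atTop)
    (hkn0 : Tendsto (fun n : ℕ => (k n : ℝ) / n) atTop (𝓝 0))
    (lam : ℕ → ℝ) (hlam_pos : ∀ n, 0 < lam n) (hlam_bdd : ∃ C, ∀ n, lam n ≤ C)
    (δ : ℕ → ℝ) (hδpos : ∀ n, 0 < δ n) (hδ0 : Tendsto δ atTop (𝓝 0))
    -- the constant τ of condition S(λₙ): τ < τ_max = inf_t 1/γ_t⁻
    (τ : ℝ) (hτ : ∀ s ∈ Icc (0:ℝ) 1, γ s < 0 → τ < -1 / γ s)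
    -- condition M(λₙ)
    (hM : ∀ y₀ y₁ : ℝ, 0 < y₀ → y₀ < y₁ → ∀ ε > 0, ∀ᶠ n : ℕ in atTop,
      ∀ s ∈ Icc (0:ℝ) 1, ∀ y ∈ Icc y₀ y₁,
        |(U s (y * ((n : ℝ) / (k n : ℝ))) - U s ((n : ℝ) / (k n : ℝ))) / A n s
          - gfun y (γ s)| ≤ ε * lam n)
    -- condition S(λₙ)
    (hS : ∀ ε > 0, ∀ ε' > 0, ∀ᶠ n : ℕ in atTop,
      ∀ s ∈ Icc (0:ℝ) 1, ∀ u ∈ Icc (0:ℝ) 1, |s - u| ≤ δ n →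
        (P {ω | ε * lam n < |X ω s - X ω u| / A n u ∧
            U u ((n : ℝ) / (k n : ℝ)) + τ * A n u < X ω u}).toReal
          ≤ ε' * (lam n * (k n : ℝ) / n)) :
    ∃ C : ℝ, ∀ᶠ n : ℕ in atTop,
      ∀ s ∈ Icc (0:ℝ) 1, ∀ u ∈ Icc (0:ℝ) 1, |s - u| ≤ δ n →
        A n u / A n s ≤ C := by
  -- identify U with quant
  have hUq : ∀ t y, U t y = quant P (fun ω => X ω t) (1 - 1/y) := by
    intro t y
    rw [hU]
    have hset : {x : ℝ | 1 - 1/y ≤ F t x} = {x | 1 - 1/y ≤ (P {ω | X ω t ≤ x}).toReal} := by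
      ext x
      simp only [mem_setOf_eq, hF]
    rw [hset]
    rfl
  -- bound on γ
  obtain ⟨Γ₀, hΓ₀⟩ := isCompact_Icc.exists_bound_of_continuousOn hγcont
  set Γ : ℝ := |Γ₀| + 1 with hΓdef
  have hΓ1 : 1 ≤ Γ := by simp only [hΓdef]; linarith [abs_nonneg Γ₀]
  have hΓpos : 0 < Γ := by linarith
  have hγΓ : ∀ t ∈ Icc (0:ℝ) 1, |γ t| ≤ Γ := by
    intro t ht
    have := hΓ₀ t ht
    rw [Real.norm_eq_abs] at this
    have h2 : Γ₀ ≤ |Γ₀| := le_abs_self _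
    linarith
  -- T and c₁
  set T : ℝ := max τ 0 with hTdef
  have hT0 : 0 ≤ T := le_max_right _ _
  have hTτ : τ ≤ T := le_max_left _ _
  have hψcont : ContinuousOn (fun t => T * max (-(γ t)) 0) (Icc (0:ℝ) 1) :=
    continuousOn_const.mul ((hγcont.neg).sup continuousOn_const)
  obtain ⟨t₀, ht₀mem, ht₀max⟩ :=
    isCompact_Icc.exists_isMaxOn (⟨0, by norm_num⟩ : (Icc (0:ℝ) 1).Nonempty) hψcont
  have hψt₀ : T * max (-(γ t₀)) 0 < 1 := by
    by_cases hneg : γ t₀ < 0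
    · rw [max_eq_left (by linarith)]
      by_cases hτ0 : τ ≤ 0
      · have hT : T = 0 := max_eq_right hτ0
        rw [hT]; norm_num
      · push_neg at hτ0
        have hTeq : T = τ := max_eq_left hτ0.le
        have hτlt := hτ t₀ ht₀mem hneg
        have hg : 0 < -(γ t₀) := by linarith
        have h5 : τ * (-(γ t₀)) < (-1/γ t₀) * (-(γ t₀)) := mul_lt_mul_of_pos_right hτlt hg
        have hne : γ t₀ ≠ 0 := by linarith
        have heq : (-1/γ t₀) * (-(γ t₀)) = 1 := by field_simp
        rw [hTeq]
        linarith
    · push_neg at hneg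
      rw [max_eq_right (by linarith)]
      norm_num
  set c₁ : ℝ := 1 - T * max (-(γ t₀)) 0 with hc₁def
  have hc₁pos : 0 < c₁ := by simp only [hc₁def]; linarith
  have hc₁le1 : c₁ ≤ 1 := by
    have : 0 ≤ T * max (-(γ t₀)) 0 := mul_nonneg hT0 (le_max_right _ _)
    simp only [hc₁def]; linarith
  have hψle : ∀ t ∈ Icc (0:ℝ) 1, T * max (-(γ t)) 0 ≤ 1 - c₁ := by
    intro t ht
    have := ht₀max ht
    simp only [hc₁def]
    simpa using this
  -- β and b
  set β : ℝ := 1/(3*(T+1)) with hβdef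
  have hβpos : 0 < β := by positivity
  set b : ℝ := max 2 (Real.exp (Real.log (2/c₁ + 2) / β)) with hbdef
  have hb2 : (2:ℝ) ≤ b := le_max_left _ _
  have hb1 : (1:ℝ) < b := by linarith
  have hb0 : (0:ℝ) < b := by linarith
  have hMc : (0:ℝ) < 2/c₁ + 2 := by positivity
  have hMc2 : (2:ℝ) ≤ 2/c₁ + 2 := by
    have : (0:ℝ) ≤ 2/c₁ := by positivity
    linarith
  have hbβ : b ^ (-β) ≤ 1/(2/c₁ + 2) := by
    have h1 : Real.exp (Real.log (2/c₁+2) / β) ≤ b := le_max_right _ _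
    have h2 : Real.log (2/c₁+2) / β ≤ Real.log b := by
      calc Real.log (2/c₁+2)/β = Real.log (Real.exp (Real.log (2/c₁+2)/β)) :=
            (Real.log_exp _).symm
        _ ≤ Real.log b := Real.log_le_log (Real.exp_pos _) h1
    have h3 : Real.log (2/c₁+2) ≤ β * Real.log b := by
      rw [div_le_iff₀ hβpos] at h2
      linarith [h2]
    have h4 : b ^ (-β) = Real.exp (-β * Real.log b) := by
      rw [Real.rpow_def_of_pos hb0]; ring_nf
    rw [h4]
    calc Real.exp (-β * Real.log b) ≤ Real.exp (-Real.log (2/c₁+2)) := by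
          apply Real.exp_le_exp.2; linarith
      _ = 1/(2/c₁+2) := by rw [Real.exp_neg, Real.exp_log hMc, one_div]
  have hbβhalf : b ^ (-β) ≤ 1/2 := by
    refine le_trans hbβ ?_
    apply one_div_le_one_div_of_le (by norm_num) hMc2
  have hbβc₁ : b ^ (-β) ≤ c₁/2 := by
    refine le_trans hbβ ?_
    rw [div_le_div_iff₀ hMc (by norm_num : (0:ℝ) < 2)]
    have hcc : c₁ * (2/c₁ + 2) = 2 + 2*c₁ := by
      field_simp
    nlinarith
  set c₀ : ℝ := min 1 (c₁/(2*Γ)) with hc₀def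
  have hc₀pos : 0 < c₀ := lt_min (by norm_num) (by positivity)
  have hc₀le1 : c₀ ≤ 1 := min_le_left _ _
  -- main lower bound on gfun b
  have hgb : ∀ t ∈ Icc (0:ℝ) 1, T + c₀ ≤ gfun b (γ t) := by
    intro t ht
    have hgΓ := hγΓ t ht
    by_cases hcase : -β ≤ γ t
    · have hlogb : 0 < Real.log b := Real.log_pos hb1
      have hE : Efun (-β * Real.log b) ≤ Efun (γ t * Real.log b) :=
        Efun_mono (mul_le_mul_of_nonneg_right hcase hlogb.le)
      have h2 : gfun b (-β) ≤ gfun b (γ t) := by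
        rw [gfun_eq hb0, gfun_eq hb0]
        exact mul_le_mul_of_nonneg_left hE hlogb.le
      have h3 : gfun b (-β) = (1 - b^(-β))/β := by
        rw [gfun, if_neg (by linarith : -β ≠ 0)]
        rw [div_eq_div_iff (by linarith : -β ≠ 0) (by linarith : β ≠ 0)]
        ring
      have h4 : ((1:ℝ)/2)/β ≤ (1 - b^(-β))/β := by
        gcongr
        linarith
      have h5 : (1/2)/β = (3/2)*(T+1) := by
        rw [hβdef]
        field_simp
      have : T + c₀ ≤ T + 1 := by linarith
      rw [h3] at h2
      rw [h5] at h4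
      linarith
    · push_neg at hcase
      have hg0 : γ t < 0 := by linarith
      have hgfun : gfun b (γ t) = (1 - b^(γ t))/(-(γ t)) := by
        rw [gfun, if_neg hg0.ne]
        rw [div_eq_div_iff hg0.ne (by linarith : -(γ t) ≠ 0)]
        ring
      have hbg : b^(γ t) ≤ c₁/2 :=
        le_trans (Real.rpow_le_rpow_of_exponent_le hb1.le hcase.le) hbβc₁
      have hnegg : 0 < -(γ t) := by linarith
      have hTg : T * (-(γ t)) ≤ 1 - c₁ := by
        have := hψle t ht
        rwa [max_eq_left (by linarith)] at this
      have hgG : -(γ t) ≤ Γ := by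
        rw [abs_le] at hgΓ
        linarith [hgΓ.1]
      have h6 : c₀ * (-(γ t)) ≤ c₁/2 := by
        have hc₀le : c₀ ≤ c₁/(2*Γ) := min_le_right _ _
        calc c₀ * (-(γ t)) ≤ (c₁/(2*Γ)) * Γ :=
              mul_le_mul hc₀le hgG hnegg.le (by positivity)
          _ = c₁/2 := by field_simp
      rw [hgfun, le_div_iff₀ hnegg]
      calc (T + c₀) * (-(γ t)) = T * (-(γ t)) + c₀ * (-(γ t)) := by ring
        _ ≤ (1 - c₁) + c₁/2 := add_le_add hTg h6
        _ = 1 - c₁/2 := by ring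
        _ ≤ 1 - b ^ (γ t) := sub_le_sub_left hbg 1
  -- remaining constants
  obtain ⟨Cl₀, hCl₀⟩ := hlam_bdd
  set Cl : ℝ := max Cl₀ 1 with hCldef
  have hCl1 : (1:ℝ) ≤ Cl := le_max_right _ _
  have hCl0 : (0:ℝ) < Cl := by linarith
  have hlamCl : ∀ n, lam n ≤ Cl := fun n => le_trans (hCl₀ n) (le_max_left _ _)
  set c₂ : ℝ := (2*b)^(-Γ) * (Real.log 4 * 4^(-Γ)) with hc₂def
  have hc₂pos : 0 < c₂ := by
    apply mul_pos (Real.rpow_pos_of_pos (by linarith) _)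
    apply mul_pos (Real.log_pos (by norm_num)) (Real.rpow_pos_of_pos (by norm_num) _)
  set C₄ : ℝ := Real.log (16*b) * (16*b)^Γ with hC₄def
  have hC₄pos : 0 < C₄ := by
    apply mul_pos (Real.log_pos (by linarith)) (Real.rpow_pos_of_pos (by linarith) _)
  set ebar : ℝ := min (c₀/2) (c₂/6) with hebardef
  have hebarpos : 0 < ebar := lt_min (by positivity) (by positivity)
  set ε₀ : ℝ := ebar / Cl with hε₀def
  have hε₀pos : 0 < ε₀ := by positivity
  have hε₀lam : ∀ n, ε₀ * lam n ≤ ebar := by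
    intro n
    rw [hε₀def]
    rw [div_mul_eq_mul_div, div_le_iff₀ hCl0]
    exact mul_le_mul_of_nonneg_left (hlamCl n) hebarpos.le
  set CC : ℝ := (C₄ + c₂/2) / (c₂/2) with hCCdef
  refine ⟨CC, ?_⟩
  have hMev := hM 2 (16*b+1) (by norm_num) (by linarith only [hb2]) ε₀ hε₀pos
  have hSev := hS ε₀ hε₀pos (1/(32*b*Cl)) (by positivity)
  filter_upwards [hMev, hSev, eventually_ge_atTop 1] with n hMn hSn hn1
  intro s hs u hu hsu
  obtain ⟨hk1, hkn⟩ := hk n hn1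
  have hnpos : (0:ℝ) < n := by exact_mod_cast hn1
  have hkpos : (0:ℝ) < k n := by exact_mod_cast hk1
  set Q : ℝ := (n:ℝ)/(k n : ℝ) with hQdef
  have hQ1 : 1 ≤ Q := by
    rw [hQdef, le_div_iff₀ hkpos]
    have hcast : (k n:ℝ) ≤ (n:ℝ) := by exact_mod_cast hkn
    linarith only [hcast]
  have hQpos : 0 < Q := by linarith only [hQ1]
  have hAu := hApos n u hu
  have hAs := hApos n s hs
  have hlamn := hlam_pos n
  have hlamle := hlamCl n
  have he : ε₀ * lam n ≤ ebar := hε₀lam n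
  have hepos : 0 < ε₀ * lam n := by positivity
  have hebc₀ : ebar ≤ c₀/2 := min_le_left _ _
  have hebc₂ : ebar ≤ c₂/6 := min_le_right _ _
  -- M instances
  have hMinst : ∀ t, t ∈ Icc (0:ℝ) 1 → ∀ y : ℝ, 2 ≤ y → y ≤ 16*b+1 →
      (gfun y (γ t) - ε₀ * lam n) * A n t ≤ U t (y*Q) - U t Q ∧
      U t (y*Q) - U t Q ≤ (gfun y (γ t) + ε₀ * lam n) * A n t := by
    intro t ht y hy1 hy2
    have h := hMn t ht y ⟨hy1, hy2⟩
    rw [abs_le] at h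
    have hA := hApos n t ht
    constructor
    · have h1 : gfun y (γ t) - ε₀ * lam n ≤ (U t (y*Q) - U t Q)/A n t := by linarith only [h.1]
      exact (le_div_iff₀ hA).1 h1
    · have h2 : (U t (y*Q) - U t Q)/A n t ≤ gfun y (γ t) + ε₀ * lam n := by linarith only [h.2]
      exact (div_le_iff₀ hA).1 h2
  have hγuΓ := hγΓ u hu
  have hγsΓ := hγΓ s hs
  have hgbu : T + c₀ ≤ gfun b (γ u) := hgb u hu
  have hgbs : T + c₀ ≤ gfun b (γ s) := hgb s hs
  have hg8b_u : gfun b (γ u) ≤ gfun (8*b) (γ u) := by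
    have h8 : (8:ℝ)*b = b*8 := mul_comm _ _
    rw [h8, gfun_mul hb0 (by norm_num : (0:ℝ) < 8)]
    have h1 := gfun_nonneg (by norm_num : (1:ℝ) ≤ 8) (γ u)
    have h2 := mul_nonneg (Real.rpow_pos_of_pos hb0 (γ u)).le h1
    linarith only [h2]
  have hdiff_u : c₂ ≤ gfun (8*b) (γ u) - gfun (2*b) (γ u) := by
    have h8 : (8:ℝ)*b = (2*b)*4 := by ring
    rw [h8, gfun_mul (by linarith : (0:ℝ) < 2*b) (by norm_num : (0:ℝ) < 4)]
    have h1 : (2*b:ℝ)^(-Γ) ≤ (2*b)^(γ u) := by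
      apply Real.rpow_le_rpow_of_exponent_le (by linarith)
      rw [abs_le] at hγuΓ
      linarith [hγuΓ.1]
    have h2 : Real.log 4 * 4^(-Γ:ℝ) ≤ gfun 4 (γ u) :=
      gfun_lb (by norm_num) (by linarith) hγuΓ
    have h3 : (0:ℝ) < Real.log 4 * 4^(-Γ:ℝ) :=
      mul_pos (Real.log_pos (by norm_num)) (Real.rpow_pos_of_pos (by norm_num) _)
    have h4 : (0:ℝ) < (2*b:ℝ)^(-Γ) := Real.rpow_pos_of_pos (by linarith) _
    have h5 : (2*b:ℝ)^(-Γ) * (Real.log 4 * 4^(-Γ:ℝ)) ≤ (2*b)^(γ u) * gfun 4 (γ u) :=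
      mul_le_mul h1 h2 h3.le (by linarith)
    have h6 : c₂ = (2*b:ℝ)^(-Γ) * (Real.log 4 * 4^(-Γ:ℝ)) := hc₂def
    linarith only [h5, h6]
  have hub_s : gfun (16*b) (γ s) ≤ C₄ := by
    have := gfun_ub (by linarith : (1:ℝ) ≤ 16*b) (by linarith : (0:ℝ) ≤ Γ) hγsΓ
    rw [hC₄def]
    exact this
  have hgbs0 : (0:ℝ) ≤ gfun b (γ s) := gfun_nonneg (by linarith) _
  have hkQ : (k n:ℝ)/(n:ℝ) = 1/Q := by rw [hQdef, one_div_div]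
  have hQb0 : 0 < b*Q := by positivity
  have hScB : (1/(32*b*Cl)) * (lam n * (k n:ℝ)/n) ≤ 1/(32*b)*(1/Q) := by
    have h1 : lam n * (k n:ℝ)/n ≤ Cl * ((k n:ℝ)/n) := by
      rw [mul_div_assoc]
      exact mul_le_mul_of_nonneg_right hlamle (by positivity)
    have h2 : (1/(32*b*Cl)) * (Cl*((k n:ℝ)/n)) = 1/(32*b)*((k n:ℝ)/n) := by
      field_simp
    calc (1/(32*b*Cl)) * (lam n * (k n:ℝ)/n)
        ≤ (1/(32*b*Cl)) * (Cl*((k n:ℝ)/n)) := by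
          apply mul_le_mul_of_nonneg_left h1 (by positivity)
      _ = 1/(32*b)*((k n:ℝ)/n) := h2
      _ = 1/(32*b)*(1/Q) := by rw [hkQ]
  have haux : ∀ z:ℝ, 1 < z → 0 < 1 - 1/z ∧ 1 - 1/z < 1 := by
    intro z hz
    have hz0 : (0:ℝ) < z := by linarith
    constructor
    · have hb1' : 1/z < 1 := by rw [div_lt_one hz0]; linarith only [hz]
      linarith only [hb1']
    · have hb2' : 0 < 1/z := by positivity
      linarith only [hb2']
  have hp8 : (1:ℝ) < (8*b)*Q := by nlinarith only [hb2, hQ1]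
  have hp16 : (1:ℝ) < (16*b)*Q := by nlinarith only [hb2, hQ1]
  have hpb : (1:ℝ) < b*Q := by nlinarith only [hb2, hQ1]
  have hp2b : (1:ℝ) < (2*b)*Q := by nlinarith only [hb2, hQ1]
  -- thresholds
  have hM8u := hMinst u hu (8*b) (by linarith only [hb2]) (by linarith only [hb2])
  have hM2u := hMinst u hu (2*b) (by linarith only [hb2]) (by linarith only [hb2])
  have hM16s := hMinst s hs (16*b) (by linarith only [hb2]) (by linarith only [hb2])
  have hMbs := hMinst s hs b (by linarith only [hb2]) (by linarith only [hb2])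
  have hthresh1 : U u Q + τ * A n u < U u ((8*b)*Q) := by
    have hco : τ + c₀/2 ≤ gfun (8*b) (γ u) - ε₀ * lam n := by
      have hec : ε₀ * lam n ≤ c₀/2 := le_trans he hebc₀
      linarith only [hg8b_u, hgbu, hTτ, hec]
    have h2 : (τ + c₀/2) * A n u ≤ (gfun (8*b) (γ u) - ε₀*lam n) * A n u :=
      mul_le_mul_of_nonneg_right hco hAu.le
    linarith only [hM8u.1, h2, mul_pos hc₀pos hAu]
  have hthresh2 : U s Q + τ * A n s < U s (b*Q) := by
    have hco : τ + c₀/2 ≤ gfun b (γ s) - ε₀ * lam n := by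
      have hec : ε₀ * lam n ≤ c₀/2 := le_trans he hebc₀
      linarith only [hgbs, hTτ, hec]
    have h2 : (τ + c₀/2) * A n s ≤ (gfun b (γ s) - ε₀*lam n) * A n s :=
      mul_le_mul_of_nonneg_right hco hAs.le
    linarith only [hMbs.1, h2, mul_pos hc₀pos hAs]
  -- Claim 1
  have hclaim1 : U u ((8*b)*Q) - ε₀ * lam n * A n u ≤ U s ((16*b)*Q) := by
    rw [hUq u ((8*b)*Q), hUq s ((16*b)*Q)]
    have hSb := hSn s hs u hu hsu
    refine transfer P (fun ω => X ω u) (fun ω => X ω s) (hXmeas u) (hXmeas s)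
      (1 - 1/((8*b)*Q)) (1 - 1/((16*b)*Q))
      (haux _ hp8).1 (haux _ hp8).2 (haux _ hp16).1 (haux _ hp16).2
      {ω | ε₀ * lam n < |X ω s - X ω u| / A n u ∧ U u Q + τ * A n u < X ω u}
      (1/(32*b)*(1/Q)) (ε₀ * lam n * A n u)
      (le_trans hSb hScB) ?_ ?_
    · have key : 1/((8*b)*Q) - 1/(32*b)*(1/Q) - 1/((16*b)*Q) = 1/(32*(b*Q)) := by
        field_simp
        ring
      have hposk : (0:ℝ) < 1/(32*(b*Q)) := by positivity
      linarith only [key, hposk]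
    · intro ω hωB hωZ
      have hZ' : U u ((8*b)*Q) ≤ X ω u := by rw [hUq u ((8*b)*Q)]; exact hωZ
      have h2 : U u Q + τ * A n u < X ω u := lt_of_lt_of_le hthresh1 hZ'
      simp only [mem_setOf_eq, not_and, not_lt] at hωB
      have h3 : |X ω s - X ω u| / A n u ≤ ε₀ * lam n := by
        by_contra hcon
        push_neg at hcon
        exact absurd (hωB hcon) (not_le.2 h2)
      rw [div_le_iff₀ hAu] at h3
      have h4 := abs_le.1 h3
      rw [← hUq u ((8*b)*Q)]
      linarith only [h4.1, hZ']
  -- Claim 2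
  have hclaim2 : U s (b*Q) - ε₀ * lam n * A n s ≤ U u ((2*b)*Q) := by
    rw [hUq s (b*Q), hUq u ((2*b)*Q)]
    have hSb := hSn u hu s hs (by rwa [abs_sub_comm])
    refine transfer P (fun ω => X ω s) (fun ω => X ω u) (hXmeas s) (hXmeas u)
      (1 - 1/(b*Q)) (1 - 1/((2*b)*Q))
      (haux _ hpb).1 (haux _ hpb).2 (haux _ hp2b).1 (haux _ hp2b).2
      {ω | ε₀ * lam n < |X ω u - X ω s| / A n s ∧ U s Q + τ * A n s < X ω s}
      (1/(32*b)*(1/Q)) (ε₀ * lam n * A n s)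
      (le_trans hSb hScB) ?_ ?_
    · have key : 1/(b*Q) - 1/(32*b)*(1/Q) - 1/((2*b)*Q) = 15/(32*(b*Q)) := by
        field_simp
        ring
      have hposk : (0:ℝ) < 15/(32*(b*Q)) := by positivity
      linarith only [key, hposk]
    · intro ω hωB hωZ
      have hZ' : U s (b*Q) ≤ X ω s := by rw [hUq s (b*Q)]; exact hωZ
      have h2 : U s Q + τ * A n s < X ω s := lt_of_lt_of_le hthresh2 hZ'
      simp only [mem_setOf_eq, not_and, not_lt] at hωB
      have h3 : |X ω u - X ω s| / A n s ≤ ε₀ * lam n := by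
        by_contra hcon
        push_neg at hcon
        exact absurd (hωB hcon) (not_le.2 h2)
      rw [div_le_iff₀ hAs] at h3
      have h4 := abs_le.1 h3
      rw [← hUq s (b*Q)]
      linarith only [h4.1, hZ']
  -- final chain
  have m1 : (c₂ - 2*(ε₀*lam n)) * A n u
      ≤ (gfun (8*b) (γ u) - gfun (2*b) (γ u) - 2*(ε₀*lam n)) * A n u :=
    mul_le_mul_of_nonneg_right (by linarith only [hdiff_u]) hAu.le
  have m2 : (gfun (16*b) (γ s) - gfun b (γ s) + 2*(ε₀*lam n)) * A n s
      ≤ (C₄ + 2*(ε₀*lam n)) * A n s :=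
    mul_le_mul_of_nonneg_right (by linarith only [hub_s, hgbs0]) hAs.le
  have hchain : (c₂ - 3*(ε₀*lam n)) * A n u ≤ (C₄ + 3*(ε₀*lam n)) * A n s := by
    have s1 : (c₂ - 2*(ε₀*lam n)) * A n u ≤ U u ((8*b)*Q) - U u ((2*b)*Q) := by
      linarith only [m1, hM8u.1, hM2u.2]
    have s2 : U s ((16*b)*Q) - U s (b*Q) ≤ (C₄ + 2*(ε₀*lam n)) * A n s := by
      linarith only [m2, hM16s.2, hMbs.1]
    linarith only [s1, s2, hclaim1, hclaim2]
  have hfinal : (c₂/2) * A n u ≤ (C₄ + c₂/2) * A n s := by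
    have h1 : 3*(ε₀*lam n) ≤ c₂/2 := by linarith only [he, hebc₂]
    have h2 : (c₂/2) * A n u ≤ (c₂ - 3*(ε₀*lam n)) * A n u :=
      mul_le_mul_of_nonneg_right (by linarith only [h1]) hAu.le
    have h3 : (C₄ + 3*(ε₀*lam n)) * A n s ≤ (C₄ + c₂/2) * A n s :=
      mul_le_mul_of_nonneg_right (by linarith only [h1]) hAs.le
    linarith only [hchain, h2, h3]
  have hc2half : (0:ℝ) < c₂/2 := by positivity
  rw [div_le_iff₀ hAs, hCCdef, div_mul_eq_mul_div, le_div_iff₀ hc2half]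
  linarith only [hfinal]
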